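/- For any graph G with no isolated vertices, 2·γ(G) ≤ γ_tR(G) ≤ 3·γ(G), where γ is the domination number and γ_tR the total Roman domination number. -/

import Mathlib

open Finset

/-- A graph has no isolated vertices. -/
def SimpleGraph.IsolateFree {V : Type*} (G : SimpleGraph V) : Prop :=
  ∀ v, ∃ u, G.Adj v u

/-- A Roman dominating function. -/
def SimpleGraph.IsRDF {V : Type*} (G : SimpleGraph V) (f : V → Fin 3) : Prop :=
  ∀ v, f v = 0 → ∃ u, G.Adj v u ∧ f u = 2

/-- A total Roman dominating function. -/
def SimpleGraph.IsTRDF {V : Type*} (G : SimpleGraph V) (f : V → Fin 3) : Prop :=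
  (∀ v, f v = 0 → ∃ u, G.Adj v u ∧ f u = 2) ∧
  (∀ v, f v ≠ 0 → ∃ u, G.Adj v u ∧ f u ≠ 0)

/-- The Roman domination number. -/
noncomputable def SimpleGraph.rdn {V : Type*} [Fintype V] (G : SimpleGraph V) : ℕ :=
  sInf {w | ∃ f : V → Fin 3, G.IsRDF f ∧ w = ∑ v, (f v : ℕ)}

/-- The total Roman domination number. -/
noncomputable def SimpleGraph.trdn {V : Type*} [Fintype V] (G : SimpleGraph V) : ℕ :=
  sInf {w | ∃ f : V → Fin 3, G.IsTRDF f ∧ w = ∑ v, (f v : ℕ)}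

/-- A total dominating set. -/
def SimpleGraph.IsTDS {V : Type*} (G : SimpleGraph V) (S : Finset V) : Prop :=
  ∀ v, ∃ u ∈ S, G.Adj v u

/-- A dominating set. -/
def SimpleGraph.IsDS {V : Type*} (G : SimpleGraph V) (S : Finset V) : Prop :=
  ∀ v, v ∈ S ∨ ∃ u ∈ S, G.Adj v u

/-- The total domination number. -/
noncomputable def SimpleGraph.tdn {V : Type*} [Fintype V] (G : SimpleGraph V) : ℕ :=
  sInf {n | ∃ S : Finset V, G.IsTDS S ∧ n = S.card}

/-- The domination number. -/
noncomputable def SimpleGraph.dn {V : Type*} [Fintype V] (G : SimpleGraph V) : ℕ :=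
  sInf {n | ∃ S : Finset V, G.IsDS S ∧ n = S.card}

/-- The total Roman bondage number, in ℕ∞ (∞ if no valid edge set exists). -/
noncomputable def SimpleGraph.btR {V : Type*} [Fintype V] (G : SimpleGraph V) : ℕ∞ :=
  sInf {n : ℕ∞ | ∃ E' : Finset (Sym2 V), ↑E' ⊆ G.edgeSet ∧
    (G.deleteEdges ↑E').IsolateFree ∧ G.trdn < (G.deleteEdges ↑E').trdn ∧ n = E'.card}

/-- The total bondage number, in ℕ∞. -/
noncomputable def SimpleGraph.bt {V : Type*} [Fintype V] (G : SimpleGraph V) : ℕ∞ :=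
  sInf {n : ℕ∞ | ∃ E' : Finset (Sym2 V), ↑E' ⊆ G.edgeSet ∧
    (G.deleteEdges ↑E').IsolateFree ∧ G.tdn < (G.deleteEdges ↑E').tdn ∧ n = E'.card}

/-- The bondage number, in ℕ∞. -/
noncomputable def SimpleGraph.bond {V : Type*} [Fintype V] (G : SimpleGraph V) : ℕ∞ :=
  sInf {n : ℕ∞ | ∃ E' : Finset (Sym2 V), ↑E' ⊆ G.edgeSet ∧
    G.dn < (G.deleteEdges ↑E').dn ∧ n = E'.card}

/-- The vertex cover number. -/
noncomputable def SimpleGraph.vcn {V : Type*} [Fintype V] (G : SimpleGraph V) : ℕ :=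
  sInf {n | ∃ S : Finset V, (∀ u v, G.Adj u v → u ∈ S ∨ v ∈ S) ∧ n = S.card}

/-- The S-external private neighborhood of v. -/
def SimpleGraph.epn {V : Type*} (G : SimpleGraph V) (v : V) (S : Set V) : Set V :=
  {w | w ∉ S ∧ G.Adj w v ∧ ∀ x ∈ S, G.Adj w x → x = v}



lemma ore_aux {V : Type*} [Fintype V] [DecidableEq V] (G : SimpleGraph V) (A : Finset V)
    (hA : ∀ v ∈ A, ∃ u ∈ A, G.Adj v u) :
    ∃ T : Finset V, T ⊆ A ∧ 2 * T.card ≤ A.card ∧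
      ∀ v ∈ A, v ∈ T ∨ ∃ u ∈ T, G.Adj v u := by
  classical
  set P : Finset V → Prop := fun D => D ⊆ A ∧ ∀ v ∈ A, v ∈ D ∨ ∃ u ∈ D, G.Adj v u with hP
  have hPA : P A := ⟨subset_rfl, fun v hv => Or.inl hv⟩
  obtain ⟨D, hDmem, hmin⟩ := Finset.exists_min_image (A.powerset.filter P) Finset.card
    ⟨A, Finset.mem_filter.2 ⟨Finset.mem_powerset.2 subset_rfl, hPA⟩⟩
  rw [Finset.mem_filter, Finset.mem_powerset] at hDmem
  obtain ⟨hDA, hDP⟩ := hDmem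
  -- A \ D dominates A
  have hcomp : ∀ v ∈ A, v ∈ A \ D ∨ ∃ u ∈ A \ D, G.Adj v u := by
    intro v hv
    by_cases hvD : v ∈ D
    · have hsub : D.erase v ⊆ A := (Finset.erase_subset _ _).trans hDA
      have hnd : ¬ P (D.erase v) := by
        intro hPE
        have h1 := hmin _ (by rw [Finset.mem_filter, Finset.mem_powerset]; exact ⟨hPE.1, hPE⟩)
        have h2 := Finset.card_erase_lt_of_mem hvD
        omega
      have hex : ∃ u ∈ A, u ∉ D.erase v ∧ ∀ w ∈ D.erase v, ¬ G.Adj u w := by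
        by_contra hc
        push_neg at hc
        refine hnd ⟨hsub, fun u hu => ?_⟩
        by_cases h : u ∈ D.erase v
        · exact Or.inl h
        · exact Or.inr (hc u hu h)
      obtain ⟨u, huA, hue, hnadj⟩ := hex
      by_cases huv : u = v
      · subst huv
        obtain ⟨x, hxA, hadj⟩ := hA u huA
        have hxu : x ≠ u := fun h => G.irrefl (h ▸ hadj)
        have hxD : x ∉ D := fun h => hnadj x (Finset.mem_erase.2 ⟨hxu, h⟩) hadj
        exact Or.inr ⟨x, Finset.mem_sdiff.2 ⟨hxA, hxD⟩, hadj⟩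
      · have huD : u ∉ D := fun h => hue (Finset.mem_erase.2 ⟨huv, h⟩)
        rcases hDP.2 u huA with h | ⟨w, hwD, hadj⟩
        · exact absurd h huD
        · have hwv : w = v := by
            by_contra h
            exact hnadj w (Finset.mem_erase.2 ⟨h, hwD⟩) hadj
          subst hwv
          exact Or.inr ⟨u, Finset.mem_sdiff.2 ⟨huA, huD⟩, hadj.symm⟩
    · exact Or.inl (Finset.mem_sdiff.2 ⟨hv, hvD⟩)
  have hPcomp : P (A \ D) := ⟨Finset.sdiff_subset, hcomp⟩
  have h1 := hmin _ (by rw [Finset.mem_filter, Finset.mem_powerset]; exact ⟨Finset.sdiff_subset, hPcomp⟩)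
  have h2 : (A \ D).card = A.card - D.card := by
    rw [Finset.card_sdiff, Finset.inter_eq_left.2 hDA]
  have h3 : D.card ≤ A.card := Finset.card_le_card hDA
  exact ⟨D, hDA, by omega, hDP.2⟩


theorem stmt_2 {V : Type*} [Fintype V] (G : SimpleGraph V) (hG : G.IsolateFree) :
    2 * G.dn ≤ G.trdn ∧ G.trdn ≤ 3 * G.dn := by
  classical
  have hfin3 : ∀ x : Fin 3, x = 0 ∨ x = 1 ∨ x = 2 := by decide
  have htrne : {w | ∃ f : V → Fin 3, G.IsTRDF f ∧ w = ∑ v, (f v : ℕ)}.Nonempty := by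
    have h2 : G.IsTRDF (fun _ => 2) := by
      constructor
      · intro v hv
        have h20 : (2 : Fin 3) ≠ 0 := by decide
        exact absurd hv h20
      · intro v _
        obtain ⟨u, hu⟩ := hG v
        have h20 : (2 : Fin 3) ≠ 0 := by decide
        exact ⟨u, hu, h20⟩
    exact ⟨∑ v : V, (((fun _ => 2 : V → Fin 3)) v : ℕ), (fun _ => 2), h2, rfl⟩
  have hdnne : {n | ∃ S : Finset V, G.IsDS S ∧ n = S.card}.Nonempty :=
    ⟨(univ : Finset V).card, univ, fun v => Or.inl (mem_univ v), rfl⟩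
  constructor
  · -- 2 * dn ≤ trdn
    obtain ⟨f, hf, heq⟩ := Nat.sInf_mem htrne
    set V1 : Finset V := univ.filter (fun v => f v = 1) with hV1
    set V2 : Finset V := univ.filter (fun v => f v = 2) with hV2
    have hw : ∑ v, (f v : ℕ) = V1.card + 2 * V2.card := by
      have key : ∀ x : Fin 3, (x : ℕ) = (if x = 1 then 1 else 0) + (if x = 2 then 2 else 0) := by
        decide
      calc ∑ v, (f v : ℕ)
          = ∑ v, ((if f v = 1 then 1 else 0) + (if f v = 2 then 2 else 0)) :=
            Finset.sum_congr rfl fun v _ => key (f v)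
        _ = (∑ v, if f v = 1 then 1 else 0) + ∑ v, (if f v = 2 then 2 else 0) :=
            Finset.sum_add_distrib
        _ = V1.card + 2 * V2.card := by
            congr 1
            · rw [Finset.sum_ite, Finset.sum_const, Finset.sum_const]; simp [hV1]
            · rw [Finset.sum_ite, Finset.sum_const, Finset.sum_const]; simp [mul_comm, hV2]
    set A : Finset V := univ.filter (fun v => f v = 1 ∧ ∃ u, G.Adj v u ∧ f u = 1) with hA
    have hAcond : ∀ v ∈ A, ∃ u ∈ A, G.Adj v u := by
      intro v hv
      rw [hA, Finset.mem_filter] at hv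
      obtain ⟨-, hv1, u, hadj, hu1⟩ := hv
      refine ⟨u, ?_, hadj⟩
      rw [hA, Finset.mem_filter]
      exact ⟨mem_univ u, hu1, v, hadj.symm, hv1⟩
    obtain ⟨T, hTA, hTcard, hTdom⟩ := ore_aux G A hAcond
    have hAV1 : A ⊆ V1 := by
      intro v hv
      rw [hA, Finset.mem_filter] at hv
      rw [hV1, Finset.mem_filter]
      exact ⟨mem_univ v, hv.2.1⟩
    set S : Finset V := V2 ∪ T with hS
    have hSdom : G.IsDS S := by
      intro v
      have hfin : ∀ u, f u = 2 → u ∈ S := fun u hu => by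
        rw [hS, Finset.mem_union]
        exact Or.inl (by rw [hV2, Finset.mem_filter]; exact ⟨mem_univ u, hu⟩)
      rcases hfin3 (f v) with h0 | h0 | h0
      · obtain ⟨u, hadj, hu2⟩ := hf.1 v h0
        exact Or.inr ⟨u, hfin u hu2, hadj⟩
      · obtain ⟨u, hadj, hu0⟩ := hf.2 v (by rw [h0]; decide)
        rcases hfin3 (f u) with hu | hu | hu
        · exact absurd hu hu0
        · have hvA : v ∈ A := by
            rw [hA, Finset.mem_filter]
            exact ⟨mem_univ v, h0, u, hadj, hu⟩
          rcases hTdom v hvA with h | ⟨w, hwT, hadj'⟩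
          · exact Or.inl (by rw [hS, Finset.mem_union]; exact Or.inr h)
          · exact Or.inr ⟨w, by rw [hS, Finset.mem_union]; exact Or.inr hwT, hadj'⟩
        · exact Or.inr ⟨u, hfin u hu, hadj⟩
      · exact Or.inl (hfin v h0)
    have hdle : G.dn ≤ S.card := Nat.sInf_le ⟨S, hSdom, rfl⟩
    have hScard : S.card ≤ V2.card + T.card := Finset.card_union_le _ _
    have hAcard : A.card ≤ V1.card := Finset.card_le_card hAV1
    have htreq : G.trdn = V1.card + 2 * V2.card := heq.trans hw
    clear_value S A V1 V2
    clear hf heq hw hAcond hTdom hAV1 hSdom hTA hfin3 htrne hdnne hG hS hA hV1 hV2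
    omega
  · -- trdn ≤ 3 * dn
    obtain ⟨S, hS, hcard⟩ := Nat.sInf_mem hdnne
    have hdn : G.dn = S.card := hcard
    choose nb hnb using hG
    set f : V → Fin 3 := fun v => if v ∈ S then 2 else if v ∈ S.image nb then 1 else 0 with hfdef
    have hne : ∀ v, f v ≠ 0 → v ∈ S ∨ v ∈ S.image nb := by
      intro v hv
      rw [hfdef] at hv
      by_cases h1 : v ∈ S
      · exact Or.inl h1
      by_cases h2 : v ∈ S.image nb
      · exact Or.inr h2
      · simp [h1, h2] at hv
    have hftr : G.IsTRDF f := by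
      constructor
      · intro v hv
        have hvS : v ∉ S := by
          intro h; rw [hfdef] at hv; simp [h] at hv
        rcases hS v with h | ⟨u, huS, hadj⟩
        · exact absurd h hvS
        · exact ⟨u, hadj, by rw [hfdef]; simp [huS]⟩
      · intro v hv
        rcases hne v hv with h | h
        · refine ⟨nb v, hnb v, ?_⟩
          rw [hfdef]
          by_cases h2 : nb v ∈ S
          · simp [h2]
          · have h3 : nb v ∈ S.image nb := Finset.mem_image.2 ⟨v, h, rfl⟩
            simp [h2, h3]
        · obtain ⟨w, hwS, hwv⟩ := Finset.mem_image.1 h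
          refine ⟨w, ?_, ?_⟩
          · have := hnb w; rw [hwv] at this; exact this.symm
          · rw [hfdef]; simp [hwS]
    have hwle : ∑ v, (f v : ℕ) ≤ 3 * S.card := by
      have hb : ∀ v, (f v : ℕ) ≤ (if v ∈ S then 2 else 0) + (if v ∈ S.image nb then 1 else 0) := by
        intro v
        rw [hfdef]
        by_cases h1 : v ∈ S
        · simp [h1]
        by_cases h2 : v ∈ S.image nb
        · simp [h1, h2]
        · simp [h1, h2]
      calc ∑ v, (f v : ℕ)
          ≤ ∑ v, ((if v ∈ S then 2 else 0) + (if v ∈ S.image nb then 1 else 0)) :=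
            Finset.sum_le_sum fun v _ => hb v
        _ = (∑ v, if v ∈ S then 2 else 0) + ∑ v, (if v ∈ S.image nb then 1 else 0) :=
            Finset.sum_add_distrib
        _ = 2 * S.card + (S.image nb).card := by
            congr 1
            · rw [Finset.sum_ite, Finset.sum_const, Finset.sum_const,
                Finset.filter_mem_eq_inter, Finset.univ_inter]
              simp [mul_comm]
            · rw [Finset.sum_ite, Finset.sum_const, Finset.sum_const,
                Finset.filter_mem_eq_inter, Finset.univ_inter]
              simp
        _ ≤ 2 * S.card + S.card := by
            have := Finset.card_image_le (s := S) (f := nb); omega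
        _ = 3 * S.card := by ring
    have htr : G.trdn ≤ ∑ v, (f v : ℕ) := Nat.sInf_le ⟨f, hftr, rfl⟩
    omega
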